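/- Let φ : ℂᴺ → ℂᴺ be the diagonal affine map φ(z) = (λ₁z₁ + b₁, ..., λ_N z_N + b_N) with all λᵢ ≠ 0. Then φ is runaway (for every compact K ⊆ ℂᴺ there exists n with φⁿ(K) ∩ K = ∅) if and only if there exists some index i with λᵢ = 1 and bᵢ ≠ 0. -/
import Mathlib


/-- The diagonal affine map φ(z)ᵢ = λᵢzᵢ + bᵢ (all λᵢ ≠ 0) is runaway iff some
coordinate is a nontrivial translation. -/
theorem stmt_6 {N : ℕ} (l b : Fin N → ℂ) (hl : ∀ i, l i ≠ 0) :
    (∀ K : Set (Fin N → ℂ), IsCompact K → ∃ n : ℕ, 1 ≤ n ∧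
        ((fun z : Fin N → ℂ => fun i => l i * z i + b i)^[n] '' K) ∩ K = ∅)
      ↔ ∃ i, l i = 1 ∧ b i ≠ 0 := by
  set φ : (Fin N → ℂ) → (Fin N → ℂ) := fun z => fun i => l i * z i + b i with hφ
  constructor
  · intro h
    by_contra hc
    push_neg at hc
    set p : Fin N → ℂ := fun i => if l i = 1 then 0 else b i / (1 - l i) with hp
    have hfix : φ p = p := by
      funext i
      by_cases hi : l i = 1
      · simp [hφ, hp, hi, hc i hi]
      · have h1 : (1 : ℂ) - l i ≠ 0 := sub_ne_zero.mpr (Ne.symm hi)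
        simp only [hφ, hp, if_neg hi]
        field_simp
        ring
    obtain ⟨n, hn1, hn⟩ := h {p} isCompact_singleton
    have hmem : p ∈ (φ^[n] '' {p}) ∩ {p} :=
      ⟨⟨p, rfl, Function.iterate_fixed hfix n⟩, rfl⟩
    rw [hn] at hmem
    exact hmem
  · rintro ⟨i, hi1, hib⟩ K hK
    have hco : ∀ n z, (φ^[n] z) i = z i + n * b i := by
      intro n
      induction n with
      | zero => intro z; simp
      | succ n ih =>
        intro z
        rw [Function.iterate_succ_apply']
        simp only [hφ, hi1, one_mul]
        rw [ih]
        push_cast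
        ring
    obtain ⟨R, hR⟩ := hK.isBounded.subset_closedBall 0
    obtain ⟨n, hn⟩ := exists_nat_gt ((2 * R) / ‖b i‖)
    refine ⟨max n 1, le_max_right _ _, ?_⟩
    rw [Set.eq_empty_iff_forall_notMem]
    rintro w ⟨⟨z, hzK, rfl⟩, hwK⟩
    have hz : ‖z i‖ ≤ R := le_trans (norm_le_pi_norm z i)
      (by simpa using Metric.mem_closedBall.mp (hR hzK))
    have hw : ‖(φ^[max n 1] z) i‖ ≤ R := le_trans (norm_le_pi_norm _ i)
      (by simpa using Metric.mem_closedBall.mp (hR hwK))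
    have hb : (0:ℝ) < ‖b i‖ := norm_pos_iff.mpr hib
    have key : ((max n 1 : ℕ) : ℝ) * ‖b i‖ ≤ 2 * R := by
      have hdiff : (φ^[max n 1] z) i - z i = ((max n 1 : ℕ) : ℂ) * b i := by
        rw [hco]; ring
      calc ((max n 1 : ℕ) : ℝ) * ‖b i‖ = ‖((max n 1 : ℕ) : ℂ) * b i‖ := by
            rw [norm_mul, Complex.norm_natCast]
        _ = ‖(φ^[max n 1] z) i - z i‖ := by rw [hdiff]
        _ ≤ ‖(φ^[max n 1] z) i‖ + ‖z i‖ := norm_sub_le _ _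
        _ ≤ R + R := add_le_add hw hz
        _ = 2 * R := by ring
    have hlt : (2 * R) / ‖b i‖ < ((max n 1 : ℕ) : ℝ) :=
      lt_of_lt_of_le hn (by exact_mod_cast le_max_left n 1)
    rw [div_lt_iff₀ hb] at hlt
    linarith
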